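/- arXiv:1208.1035 — 2 statements merged into one kernel-verified Lean document; each statement's English description precedes it below -/
import Mathlib

section
/- For p > 1 and the normalized Barenblatt profile B_p(x) = (C_p - |x|²)₊^{1/(p-1)} with unit mass, the p-th Fisher information satisfies I_p(B_p) = 2np/(p-1). -/
open MeasureTheory Real Filter Asymptotics


lemma maxrpow_hasDerivAt {s : ℝ} (hs : 1 < s) (t : ℝ) :
    HasDerivAt (fun u : ℝ => max u 0 ^ s) (s * max t 0 ^ (s - 1)) t := by
  rcases lt_trichotomy t 0 with ht | ht | ht
  · have hev : (fun u : ℝ => max u 0 ^ s) =ᶠ[nhds t] fun _ => (0:ℝ) ^ s := by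
      filter_upwards [eventually_lt_nhds ht] with u hu
      rw [max_eq_right hu.le]
    have : HasDerivAt (fun _ : ℝ => (0:ℝ) ^ s) 0 t := hasDerivAt_const _ _
    have h2 := this.congr_of_eventuallyEq hev
    simpa [max_eq_right ht.le, Real.zero_rpow (by linarith : s - 1 ≠ 0)] using h2
  · subst ht
    have h0 : max (0:ℝ) 0 ^ s = 0 := by simp [Real.zero_rpow (by linarith : s ≠ 0)]
    rw [hasDerivAt_iff_isLittleO]
    simp only [max_self, Real.zero_rpow (by linarith : s - 1 ≠ 0), mul_zero, smul_zero,
      sub_zero, h0, Real.zero_rpow (by linarith : s ≠ 0)]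
    rw [Asymptotics.isLittleO_iff]
    intro c hc
    have htend : Tendsto (fun u : ℝ => |u| ^ (s - 1)) (nhds 0) (nhds 0) := by
      have h1 : ContinuousAt (fun x : ℝ => x ^ (s - 1)) 0 :=
        Real.continuousAt_rpow_const 0 (s - 1) (Or.inr (by linarith))
      have habs : Tendsto (fun u : ℝ => |u|) (nhds 0) (nhds 0) := by
        simpa using continuous_abs.tendsto (0:ℝ)
      have := h1.tendsto.comp habs
      simpa [Function.comp_def, Real.zero_rpow (by linarith : s - 1 ≠ 0)] using this
    filter_upwards [htend.eventually (eventually_le_nhds hc)] with u hu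
    have h1 : max u 0 ^ s ≤ |u| ^ s :=
      Real.rpow_le_rpow (le_max_right _ _) (max_le (le_abs_self u) (abs_nonneg u))
        (by linarith)
    have h2 : |u| ^ s = |u| ^ (s - 1) * |u| := by
      rcases eq_or_ne u 0 with rfl | hu0
      · simp [Real.zero_rpow (by linarith : s ≠ 0)]
      · rw [← Real.rpow_add_one (abs_ne_zero.2 hu0)]; ring_nf
    have h3 : ‖max u 0 ^ s‖ = max u 0 ^ s := by
      rw [Real.norm_eq_abs, abs_of_nonneg (Real.rpow_nonneg (le_max_right _ _) _)]
    rw [h3]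
    calc max u 0 ^ s ≤ |u| ^ (s - 1) * |u| := h2 ▸ h1
      _ ≤ c * ‖u‖ := by
          rw [Real.norm_eq_abs]
          exact mul_le_mul_of_nonneg_right hu (abs_nonneg u)
  · have hev : (fun u : ℝ => max u 0 ^ s) =ᶠ[nhds t] fun u => u ^ s := by
      filter_upwards [eventually_gt_nhds ht] with u hu
      rw [max_eq_left hu.le]
    have h1 : HasDerivAt (fun u : ℝ => u ^ s) (s * t ^ (s - 1)) t :=
      Real.hasDerivAt_rpow_const (Or.inl ht.ne')
    have h2 := h1.congr_of_eventuallyEq hev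
    simpa [max_eq_left ht.le] using h2

lemma maxrpow_continuous {a : ℝ} (ha : 0 < a) :
    Continuous (fun u : ℝ => max u 0 ^ a) := by
  rw [continuous_iff_continuousAt]
  intro u
  exact (Real.continuousAt_rpow_const _ _ (Or.inr ha.le)).comp
    ((continuous_id.max continuous_const).continuousAt)

lemma radial_cont {a C : ℝ} (ha : 0 < a) (m : ℕ) :
    Continuous (fun y : ℝ => y ^ m * max (C - y ^ 2) 0 ^ a) :=
  (continuous_pow m).mul
    ((maxrpow_continuous ha).comp (continuous_const.sub (continuous_pow 2)))

lemma ioi_eq_interval {g : ℝ → ℝ} (hg : Continuous g) {b : ℝ} (hb : 0 < b)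
    (hzero : ∀ y, b ≤ y → g y = 0) :
    ∫ y in Set.Ioi (0:ℝ), g y = ∫ y in (0:ℝ)..b, g y := by
  rw [intervalIntegral.integral_of_le hb.le]
  rw [← Set.Ioc_union_Ioi_eq_Ioi hb.le]
  have heq : Set.EqOn g 0 (Set.Ioi b) := fun y hy => hzero y (le_of_lt hy)
  rw [setIntegral_union (Set.Ioc_disjoint_Ioi le_rfl) measurableSet_Ioi
    (hg.integrableOn_Ioc) ((integrableOn_congr_fun heq measurableSet_Ioi).2 integrableOn_zero)]
  have h0 : ∫ y in Set.Ioi b, g y = 0 :=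
    setIntegral_eq_zero_of_forall_eq_zero fun y hy => heq hy
  rw [h0, add_zero]

lemma radial_zero {a C : ℝ} (ha : a ≠ 0) (m : ℕ) {b : ℝ} (hb : 0 < b) (hb2 : b ^ 2 = C) :
    ∀ y : ℝ, b ≤ y → y ^ m * max (C - y ^ 2) 0 ^ a = 0 := by
  intro y hy
  rcases lt_or_eq_of_le hy with h | h
  · have : C - y ^ 2 < 0 := by nlinarith
    rw [max_eq_right this.le, Real.zero_rpow ha, mul_zero]
  · rw [← h, ← hb2]
    simp [Real.zero_rpow ha]

lemma key1d {n : ℕ} (hn : 1 ≤ n) {s C : ℝ} (hs : 1 < s) (hC : 0 < C) :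
    (n:ℝ) * ∫ y in Set.Ioi (0:ℝ), y ^ (n-1) * max (C - y ^ 2) 0 ^ s
      = 2 * s * ∫ y in Set.Ioi (0:ℝ), y ^ (n+1) * max (C - y ^ 2) 0 ^ (s - 1) := by
  set b := Real.sqrt C with hbdef
  have hb : 0 < b := Real.sqrt_pos.2 hC
  have hb2 : b ^ 2 = C := Real.sq_sqrt hC.le
  have hs0 : (0:ℝ) < s := by linarith
  have hs1 : (0:ℝ) < s - 1 := by linarith
  -- derivative of Φ
  set Φ' : ℝ → ℝ := fun y => (n:ℝ) * (y ^ (n-1) * max (C - y ^ 2) 0 ^ s)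
      - 2 * s * (y ^ (n+1) * max (C - y ^ 2) 0 ^ (s - 1)) with hΦ'
  have hderiv : ∀ y : ℝ, HasDerivAt (fun y : ℝ => y ^ n * max (C - y ^ 2) 0 ^ s) (Φ' y) y := by
    intro y
    have h1 : HasDerivAt (fun y : ℝ => y ^ n) ((n:ℝ) * y ^ (n-1)) y := hasDerivAt_pow n y
    have hin : HasDerivAt (fun u : ℝ => C - u ^ 2) (-(2 * y ^ 1)) y :=
      (hasDerivAt_pow 2 y).const_sub C
    have h2 : HasDerivAt (fun y : ℝ => max (C - y ^ 2) 0 ^ s)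
        ((s * max (C - y ^ 2) 0 ^ (s - 1)) * (-(2 * y ^ 1))) y :=
      (maxrpow_hasDerivAt hs _).comp y hin
    have := h1.mul h2
    refine this.congr_deriv ?_
    simp only [hΦ']
    ring_nf
  have hcontPhi' : Continuous Φ' := by
    rw [hΦ']
    exact (continuous_const.mul (radial_cont hs0 (n-1))).sub (continuous_const.mul (radial_cont hs1 (n+1)))
  have hFTC : ∫ y in (0:ℝ)..b, Φ' y = 0 := by
    rw [intervalIntegral.integral_eq_sub_of_hasDerivAt (fun y _ => hderiv y) (hcontPhi'.intervalIntegrable 0 b)]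
    have h1 : C - b ^ 2 = 0 := by rw [hb2]; ring
    have h2 : b ^ n * max (C - b ^ 2) 0 ^ s = 0 := by
      rw [h1]; simp [Real.zero_rpow hs0.ne']
    have h3 : (0:ℝ) ^ n * max (C - (0:ℝ) ^ 2) 0 ^ s = 0 := by
      rw [zero_pow (by omega : n ≠ 0), zero_mul]
    rw [h2, h3, sub_zero]
  have e1 : ∫ y in (0:ℝ)..b, Φ' y
      = (n:ℝ) * (∫ y in (0:ℝ)..b, y ^ (n-1) * max (C - y ^ 2) 0 ^ s)
        - 2 * s * (∫ y in (0:ℝ)..b, y ^ (n+1) * max (C - y ^ 2) 0 ^ (s - 1)) := by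
    simp only [hΦ']
    rw [intervalIntegral.integral_sub (f := fun y => (n:ℝ) * (y ^ (n-1) * max (C - y ^ 2) 0 ^ s))
      (g := fun y => 2 * s * (y ^ (n+1) * max (C - y ^ 2) 0 ^ (s - 1)))
      ((continuous_const.mul (radial_cont hs0 (n-1))).intervalIntegrable 0 b)
      ((continuous_const.mul (radial_cont hs1 (n+1))).intervalIntegrable 0 b),
      intervalIntegral.integral_const_mul, intervalIntegral.integral_const_mul]
  rw [ioi_eq_interval (radial_cont hs0 (n-1)) hb (radial_zero hs0.ne' (n-1) hb hb2),
    ioi_eq_interval (radial_cont hs1 (n+1)) hb (radial_zero hs1.ne' (n+1) hb hb2)]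
  rw [e1] at hFTC
  linarith

lemma pos1d {s C : ℝ} (m : ℕ) (hs0 : 0 < s) (hC : 0 < C) :
    0 < ∫ y in Set.Ioi (0:ℝ), y ^ m * max (C - y ^ 2) 0 ^ s := by
  set b := Real.sqrt C with hbdef
  have hb : 0 < b := Real.sqrt_pos.2 hC
  have hb2 : b ^ 2 = C := Real.sq_sqrt hC.le
  rw [ioi_eq_interval (radial_cont hs0 m) hb (radial_zero hs0.ne' m hb hb2)]
  apply intervalIntegral.intervalIntegral_pos_of_pos_on ((radial_cont hs0 m).intervalIntegrable 0 b) ?_ hb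
  intro y hy
  have h1 : 0 < C - y ^ 2 := by nlinarith [hy.1, hy.2]
  rw [max_eq_left h1.le]
  exact mul_pos (pow_pos hy.1 m) (Real.rpow_pos_of_pos h1 s)


open InnerProductSpace in
lemma maxrpow_gradient {n : ℕ} {s C : ℝ} (hs : 1 < s) (x : EuclideanSpace ℝ (Fin n)) :
    HasGradientAt (fun y : EuclideanSpace ℝ (Fin n) => max (C - ‖y‖ ^ 2) 0 ^ s)
      ((s * max (C - ‖x‖ ^ 2) 0 ^ (s - 1) * (-2)) • x) x := by
  set c := s * max (C - ‖x‖ ^ 2) 0 ^ (s - 1) with hc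
  have hF : HasFDerivAt (fun y : EuclideanSpace ℝ (Fin n) => C - ‖y‖ ^ 2)
      (-(2 • innerSL ℝ x)) x := ((hasStrictFDerivAt_norm_sq x).hasFDerivAt).const_sub C
  have hD : HasDerivAt (fun u : ℝ => max u 0 ^ s) c (C - ‖x‖ ^ 2) :=
    maxrpow_hasDerivAt hs _
  have hcomp := hD.comp_hasFDerivAt x hF
  have key : (c • (-(2 • innerSL ℝ x)) : EuclideanSpace ℝ (Fin n) →L[ℝ] ℝ)
      = toDual ℝ (EuclideanSpace ℝ (Fin n)) ((c * (-2)) • x) := by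
    ext y
    simp [toDual_apply_apply, real_inner_smul_left]
    ring
  rw [key] at hcomp
  have h2 := hcomp.hasGradientAt
  rw [LinearIsometryEquiv.symm_apply_apply] at h2
  exact h2


/-- for `p > 1` and the unit-mass Barenblatt profile
`B_p(x) = (C_p - |x|²)₊^{1/(p-1)}`, the `p`-th Fisher information is
`I_p(B_p) = 2 n p/(p-1)`. -/
theorem barenblatt_fisher_information
    (n : ℕ) (hn : 1 ≤ n) (p : ℝ) (hp : 1 < p) (C : ℝ) (hC : 0 < C)
    (B : EuclideanSpace ℝ (Fin n) → ℝ)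
    (hB : ∀ x, B x = max (C - ‖x‖ ^ 2) 0 ^ (1 / (p - 1)))
    (hmass : ∫ x, B x = 1) :
    (∫ x, B x ^ p)⁻¹ *
        ∫ x in {x : EuclideanSpace ℝ (Fin n) | 0 < B x},
          ‖gradient (fun y => B y ^ p) x‖ ^ 2 / B x
      = 2 * (n : ℝ) * p / (p - 1) := by
  have hp1 : (0:ℝ) < p - 1 := by linarith
  set a : ℝ := 1 / (p - 1) with hadef
  set s : ℝ := p / (p - 1) with hsdef
  have ha : 0 < a := by positivity
  have hs : 1 < s := (one_lt_div hp1).2 (by linarith)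
  have hs0 : 0 < s := by linarith
  have hsa : s - 1 = a := by rw [hadef, hsdef]; field_simp; ring
  have hBp : ∀ x : EuclideanSpace ℝ (Fin n), B x ^ p = max (C - ‖x‖ ^ 2) 0 ^ s := by
    intro x
    rw [hB x, ← Real.rpow_mul (le_max_right _ _), one_div_mul_eq_div]
  set b := Real.sqrt C with hbdef
  have hb : 0 < b := Real.sqrt_pos.2 hC
  have hb2 : b ^ 2 = C := Real.sq_sqrt hC.le
  -- the support set is the ball
  have hset : {x : EuclideanSpace ℝ (Fin n) | 0 < B x} = Metric.ball (0 : EuclideanSpace ℝ (Fin n)) b := by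
    ext x
    simp only [Set.mem_setOf_eq, Metric.mem_ball, dist_zero_right, hB x]
    constructor
    · intro h
      by_contra hcon
      push_neg at hcon
      have h1 : C - ‖x‖ ^ 2 ≤ 0 := by nlinarith [norm_nonneg x]
      rw [max_eq_right h1, Real.zero_rpow ha.ne'] at h
      exact lt_irrefl 0 h
    · intro h
      have h1 : 0 < C - ‖x‖ ^ 2 := by nlinarith [norm_nonneg x]
      rw [max_eq_left h1.le]
      exact Real.rpow_pos_of_pos h1 _
  -- pointwise computation on the ball
  have hptwise : ∀ x ∈ Metric.ball (0 : EuclideanSpace ℝ (Fin n)) b,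
      ‖gradient (fun y => B y ^ p) x‖ ^ 2 / B x = (2*s)^2 * (‖x‖ ^ 2 * B x) := by
    intro x hx
    rw [Metric.mem_ball, dist_zero_right] at hx
    have h1 : 0 < C - ‖x‖ ^ 2 := by nlinarith [norm_nonneg x]
    have hBx : B x = (C - ‖x‖ ^ 2) ^ a := by rw [hB x, max_eq_left h1.le]
    have hBpos : 0 < B x := hBx ▸ Real.rpow_pos_of_pos h1 a
    have hgrad : gradient (fun y => B y ^ p) x
        = (s * (C - ‖x‖ ^ 2) ^ a * (-2)) • x := by
      have hfun : (fun y => B y ^ p)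
          = fun y : EuclideanSpace ℝ (Fin n) => max (C - ‖y‖ ^ 2) 0 ^ s := funext hBp
      rw [hfun]
      have := (maxrpow_gradient (n := n) (C := C) hs x).gradient
      rwa [hsa, max_eq_left h1.le] at this
    rw [div_eq_iff hBpos.ne', hgrad, norm_smul, mul_pow, Real.norm_eq_abs, sq_abs, hBx]
    ring
  -- convert set integral
  rw [hset]
  rw [setIntegral_congr_fun measurableSet_ball hptwise, integral_const_mul]
  have hext : ∫ x in Metric.ball (0 : EuclideanSpace ℝ (Fin n)) b, ‖x‖ ^ 2 * B x
      = ∫ x : EuclideanSpace ℝ (Fin n), ‖x‖ ^ 2 * B x := by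
    apply setIntegral_eq_integral_of_forall_compl_eq_zero
    intro x hx
    rw [Metric.mem_ball, dist_zero_right, not_lt] at hx
    have h1 : C - ‖x‖ ^ 2 ≤ 0 := by nlinarith [norm_nonneg x]
    rw [hB x, max_eq_right h1, Real.zero_rpow ha.ne', mul_zero]
  rw [hext]
  -- radial reduction
  haveI : Nontrivial (EuclideanSpace ℝ (Fin n)) := by
    apply Module.nontrivial_of_finrank_pos (R := ℝ)
    rw [finrank_euclideanSpace_fin]; omega
  set vol := (volume (Metric.ball (0 : EuclideanSpace ℝ (Fin n)) 1)).toReal with hvoldef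
  have hrad : ∀ f : ℝ → ℝ, ∫ x : EuclideanSpace ℝ (Fin n), f ‖x‖
      = (n:ℝ) * vol * ∫ y in Set.Ioi (0:ℝ), y ^ (n-1) * f y := by
    intro f
    have h := integral_fun_norm_addHaar (volume : Measure (EuclideanSpace ℝ (Fin n))) f
    rw [finrank_euclideanSpace_fin] at h
    simpa [nsmul_eq_mul, smul_eq_mul, mul_assoc, hvoldef, measureReal_def] using h
  set K1 := ∫ y in Set.Ioi (0:ℝ), y ^ (n+1) * max (C - y ^ 2) 0 ^ a with hK1def
  set K2 := ∫ y in Set.Ioi (0:ℝ), y ^ (n-1) * max (C - y ^ 2) 0 ^ s with hK2def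
  have hM : ∫ x : EuclideanSpace ℝ (Fin n), ‖x‖ ^ 2 * B x = (n:ℝ) * vol * K1 := by
    have h1 : ∀ x : EuclideanSpace ℝ (Fin n), ‖x‖ ^ 2 * B x
        = (fun y : ℝ => y ^ 2 * max (C - y ^ 2) 0 ^ a) ‖x‖ := by
      intro x; rw [hB x]
    calc ∫ x : EuclideanSpace ℝ (Fin n), ‖x‖ ^ 2 * B x
        = ∫ x : EuclideanSpace ℝ (Fin n), (fun y : ℝ => y ^ 2 * max (C - y ^ 2) 0 ^ a) ‖x‖ :=
          integral_congr_ae (Eventually.of_forall h1)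
      _ = (n:ℝ) * vol * ∫ y in Set.Ioi (0:ℝ),
            y ^ (n-1) * (fun y : ℝ => y ^ 2 * max (C - y ^ 2) 0 ^ a) y :=
            hrad (fun y : ℝ => y ^ 2 * max (C - y ^ 2) 0 ^ a)
      _ = (n:ℝ) * vol * K1 := ?_
    congr 1
    apply setIntegral_congr_fun measurableSet_Ioi
    intro y hy
    have h2 : n - 1 + 2 = n + 1 := by omega
    simp only
    rw [← h2, pow_add]
    ring
  have hP : ∫ x : EuclideanSpace ℝ (Fin n), B x ^ p = (n:ℝ) * vol * K2 := by
    have h1 : ∀ x : EuclideanSpace ℝ (Fin n), B x ^ p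
        = (fun y : ℝ => max (C - y ^ 2) 0 ^ s) ‖x‖ := hBp
    calc ∫ x : EuclideanSpace ℝ (Fin n), B x ^ p
        = ∫ x : EuclideanSpace ℝ (Fin n), (fun y : ℝ => max (C - y ^ 2) 0 ^ s) ‖x‖ :=
          integral_congr_ae (Eventually.of_forall h1)
      _ = (n:ℝ) * vol * ∫ y in Set.Ioi (0:ℝ),
            y ^ (n-1) * (fun y : ℝ => max (C - y ^ 2) 0 ^ s) y :=
            hrad (fun y : ℝ => max (C - y ^ 2) 0 ^ s)
  rw [hM, hP]
  -- final arithmetic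
  have hkey : (n:ℝ) * K2 = 2 * s * K1 := by
    have := key1d hn hs hC
    rwa [hsa, ← hK1def, ← hK2def] at this
  have hK2pos : 0 < K2 := pos1d (n-1) hs0 hC
  have hvolpos : 0 < vol := by
    rw [hvoldef]
    apply ENNReal.toReal_pos (Metric.measure_ball_pos volume _ one_pos).ne'
    exact (MeasureTheory.measure_ball_lt_top).ne
  have hnpos : (0:ℝ) < n := by exact_mod_cast hn
  have hne : ((n:ℝ) * vol * K2) ≠ 0 := by positivity
  have hgoal : 2 * (n:ℝ) * p / (p - 1) = 2 * n * s := by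
    rw [hsdef]; ring
  rw [hgoal, inv_mul_eq_div, div_eq_iff hne]
  linear_combination (-2 * s * (n:ℝ) * vol) * hkey
end

section
/- For n/(n+2) < p < 1 and the normalized Barenblatt profile B_p(x) = (C_p + |x|²)^{1/(p-1)} of unit mass on ℝⁿ, the p-th Fisher information satisfies I_p(B_p) = 2np/(1-p). -/
open MeasureTheory Real

section Aux
open Set Filter InnerProductSpace

private lemma int_aux (k : ℕ) (β C : ℝ) (hC : 0 < C) (h : (k:ℝ) + 2*β < -1) :
    IntegrableOn (fun r : ℝ => r ^ k * (C + r^2) ^ β) (Ioi 0) := by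
  have hβ : β ≤ 0 := by nlinarith [Nat.cast_nonneg (α := ℝ) k]
  have hcont : Continuous (fun r : ℝ => r ^ k * (C + r^2) ^ β) :=
    (continuous_pow k).mul
      ((continuous_const.add (continuous_pow 2)).rpow_const (fun x => Or.inl (by have := sq_nonneg x; exact ne_of_gt (show 0 < C + x^2 by linarith))))
  have h1 : IntegrableOn (fun r : ℝ => r ^ k * (C + r^2) ^ β) (Ioc 0 1) :=
    hcont.integrableOn_Ioc
  have h2 : IntegrableOn (fun r : ℝ => r ^ k * (C + r^2) ^ β) (Ioi 1) := by
    have hg : IntegrableOn (fun r : ℝ => r ^ ((k:ℝ) + 2*β)) (Ioi 1) :=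
      integrableOn_Ioi_rpow_of_lt h one_pos
    refine hg.mono' hcont.aestronglyMeasurable.restrict ?_
    filter_upwards [ae_restrict_mem measurableSet_Ioi] with r (hr : 1 < r)
    have hr0 : 0 < r := lt_trans one_pos hr
    have hb : (C + r^2) ^ β ≤ (r^2) ^ β :=
      rpow_le_rpow_of_nonpos (by positivity) (le_add_of_nonneg_left hC.le) hβ
    have : r ^ k * (C + r^2) ^ β ≤ r ^ ((k:ℝ) + 2*β) := by
      calc r ^ k * (C + r^2) ^ β ≤ r ^ k * (r^2) ^ β :=
            mul_le_mul_of_nonneg_left hb (by positivity)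
        _ = r ^ ((k:ℝ) + 2*β) := by
            rw [← rpow_natCast r k, ← rpow_natCast r 2, ← rpow_mul hr0.le, ← rpow_add hr0]
            norm_num
    rw [Real.norm_eq_abs, abs_of_nonneg (by positivity)]
    exact this
  have := h1.union h2
  rwa [Ioc_union_Ioi_eq_Ioi one_pos.le] at this

private lemma key_deriv (n : ℕ) (hn : 1 ≤ n) (α C : ℝ) (hC : 0 < C) (r : ℝ) :
    HasDerivAt (fun r : ℝ => r ^ n * (C + r^2) ^ (α+1))
      ((n:ℝ) * C * (r ^ (n-1) * (C + r^2) ^ α)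
        + ((n:ℝ) + 2 + 2*α) * (r ^ (n+1) * (C + r^2) ^ α)) r := by
  have hpos : (0:ℝ) < C + r^2 := by positivity
  have h1 : HasDerivAt (fun r : ℝ => C + r^2) (2*r) r := by
    simpa using ((hasDerivAt_pow 2 r).const_add C)
  have h2 : HasDerivAt (fun r : ℝ => (C + r^2) ^ (α+1))
      (2*r * (α+1) * (C + r^2) ^ (α+1-1)) r :=
    h1.rpow_const (Or.inl hpos.ne')
  have h3 := (hasDerivAt_pow n r).mul h2
  refine h3.congr_deriv ?_
  symm
  have e1 : α + 1 - 1 = α := by ring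
  have e2 : (C + r^2) ^ (α+1) = (C + r^2) ^ α * (C + r^2) := by
    rw [rpow_add_one hpos.ne']
  have e3 : r ^ (n-1) * r^2 = r ^ (n+1) := by
    rw [← pow_add]; congr 1; omega
  have e4 : r ^ n * r = r ^ (n+1) := by rw [← pow_succ]
  rw [e1, e2]
  linear_combination (-(n:ℝ) * (C + r^2) ^ α) * e3 + (-(2*(α+1))*(C + r^2) ^ α) * e4

private lemma key_ftc (n : ℕ) (hn : 1 ≤ n) (α C : ℝ) (hC : 0 < C)
    (hα : (n:ℝ) + 2 + 2*α < 0) :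
    (n:ℝ) * C * (∫ r in Ioi (0:ℝ), r ^ (n-1) * (C + r^2) ^ α)
      + ((n:ℝ) + 2 + 2*α) * (∫ r in Ioi (0:ℝ), r ^ (n+1) * (C + r^2) ^ α) = 0 := by
  have hα1 : α + 1 < 0 := by nlinarith [Nat.cast_nonneg (α := ℝ) n]
  have hI : IntegrableOn (fun r : ℝ => r ^ (n-1) * (C + r^2) ^ α) (Ioi 0) := by
    refine int_aux (n-1) α C hC ?_
    have : ((n-1 : ℕ) : ℝ) ≤ (n:ℝ) := by exact_mod_cast Nat.cast_le.mpr (Nat.sub_le n 1)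
    linarith
  have hJ : IntegrableOn (fun r : ℝ => r ^ (n+1) * (C + r^2) ^ α) (Ioi 0) := by
    refine int_aux (n+1) α C hC ?_
    push_cast; linarith
  set F : ℝ → ℝ := fun r => r ^ n * (C + r^2) ^ (α+1) with hFdef
  have hFcont : Continuous F :=
    (continuous_pow n).mul
      ((continuous_const.add (continuous_pow 2)).rpow_const (fun x => Or.inl (by have := sq_nonneg x; exact ne_of_gt (show 0 < C + x^2 by linarith))))
  have hF'int : IntegrableOn (fun r : ℝ =>
      (n:ℝ) * C * (r ^ (n-1) * (C + r^2) ^ α)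
        + ((n:ℝ) + 2 + 2*α) * (r ^ (n+1) * (C + r^2) ^ α)) (Ioi 0) :=
    (hI.const_mul _).add (hJ.const_mul _)
  have htend : Tendsto F atTop (nhds 0) := by
    have hlim : Tendsto (fun r : ℝ => r ^ ((n:ℝ) + 2*(α+1))) atTop (nhds 0) := by
      have : (n:ℝ) + 2*(α+1) = -(-((n:ℝ) + 2*(α+1))) := by ring
      rw [this]
      exact tendsto_rpow_neg_atTop (by linarith)
    refine squeeze_zero' ?_ ?_ hlim
    · filter_upwards [eventually_ge_atTop (0:ℝ)] with r hr
      positivity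
    · filter_upwards [eventually_ge_atTop (1:ℝ)] with r hr
      have hr0 : 0 < r := lt_of_lt_of_le one_pos hr
      have hb : (C + r^2) ^ (α+1) ≤ (r^2) ^ (α+1) :=
        rpow_le_rpow_of_nonpos (by positivity) (le_add_of_nonneg_left hC.le) hα1.le
      calc F r ≤ r ^ n * (r^2) ^ (α+1) :=
            mul_le_mul_of_nonneg_left hb (by positivity)
        _ = r ^ ((n:ℝ) + 2*(α+1)) := by
            rw [← rpow_natCast r n, ← rpow_natCast r 2, ← rpow_mul hr0.le, ← rpow_add hr0]
            norm_num
  have hFTC := integral_Ioi_of_hasDerivAt_of_tendsto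
    (hFcont.continuousWithinAt)
    (fun r _ => key_deriv n hn α C hC r) hF'int htend
  have hF0 : F 0 = 0 := by
    simp [hFdef, zero_pow (by omega : n ≠ 0)]
  rw [hF0, sub_zero,
    integral_add (hI.const_mul _) (hJ.const_mul _), integral_const_mul, integral_const_mul] at hFTC
  exact hFTC

private lemma grad_aux {n : ℕ} (C q : ℝ) (hC : 0 < C) (x : EuclideanSpace ℝ (Fin n)) :
    HasGradientAt (fun y : EuclideanSpace ℝ (Fin n) => (C + ‖y‖^2) ^ q)
      ((2*q*(C + ‖x‖^2)^(q-1)) • x) x := by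
  have hpos : (0:ℝ) < C + ‖x‖^2 := by positivity
  have h1 : HasFDerivAt (fun y : EuclideanSpace ℝ (Fin n) => C + ‖y‖^2) (2 • (innerSL ℝ x)) x :=
    ((hasStrictFDerivAt_norm_sq x).hasFDerivAt).const_add C
  have h3 : HasDerivAt (fun t : ℝ => t ^ q) (q * (C + ‖x‖^2) ^ (q-1)) (C + ‖x‖^2) :=
    Real.hasDerivAt_rpow_const (Or.inl hpos.ne')
  have h4 := h3.comp_hasFDerivAt x h1
  have h5 := h4.hasGradientAt
  convert h5 using 1
  · rfl
  apply (toDual ℝ (EuclideanSpace ℝ (Fin n))).injective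
  rw [LinearIsometryEquiv.apply_symm_apply]
  refine ContinuousLinearMap.ext fun y => ?_
  have : toDual ℝ (EuclideanSpace ℝ (Fin n)) ((2*q*(C + ‖x‖^2)^(q-1)) • x) y
      = (2*q*(C + ‖x‖^2)^(q-1)) * inner ℝ x y := by
    rw [toDual_apply_apply, real_inner_smul_left]
  rw [this]
  simp only [ContinuousLinearMap.smul_apply, innerSL_apply_apply, smul_eq_mul]
  ring

end Aux

set_option maxHeartbeats 2000000 in
/-- for `n/(n+2) < p < 1` and the unit-mass Barenblatt profile
`B_p(x) = (C_p + |x|²)^{1/(p-1)}`, the `p`-th Fisher information is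
`I_p(B_p) = 2 n p/(1-p)`. -/
theorem barenblatt_fisher_information_fast_diffusion
    (n : ℕ) (hn : 1 ≤ n) (p : ℝ)
    (hp_lower : (n : ℝ) / ((n : ℝ) + 2) < p) (hp_upper : p < 1)
    (C : ℝ) (hC : 0 < C)
    (B : EuclideanSpace ℝ (Fin n) → ℝ)
    (hB : ∀ x, B x = (C + ‖x‖ ^ 2) ^ (1 / (p - 1)))
    (hmass : ∫ x, B x = 1) :
    (∫ x, B x ^ p)⁻¹ * ∫ x, ‖gradient (fun y => B y ^ p) x‖ ^ 2 / B x
      = 2 * (n : ℝ) * p / (1 - p) := by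
  classical
  set α : ℝ := 1 / (p - 1) with hα
  have hn2 : (0:ℝ) < (n:ℝ) + 2 := by positivity
  have hp0 : 0 < p := lt_of_le_of_lt (by positivity) hp_lower
  have hp1 : p - 1 < 0 := by linarith
  have hp1' : p - 1 ≠ 0 := hp1.ne
  have hD : 0 < ((n:ℝ) + 2) * p - n := by
    have := (div_lt_iff₀ hn2).mp hp_lower
    nlinarith
  have hαp1 : α * (p - 1) = 1 := by
    rw [hα]; field_simp
  have hα1 : α + 1 = p / (p - 1) := by
    rw [hα]; field_simp; ring
  have hα1neg : α + 1 < 0 := by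
    rw [hα1]
    exact div_neg_of_pos_of_neg hp0 hp1
  have hS : (n:ℝ) + 2 + 2*α < 0 := by
    have h1 : ((n:ℝ) + 2 + 2*α) * (p - 1) = ((n:ℝ)+2)*p - n := by
      nlinarith [hαp1]
    nlinarith
  have hSne : (n:ℝ) + 2 + 2*α ≠ 0 := hS.ne
  haveI : Nontrivial (EuclideanSpace ℝ (Fin n)) :=
    Module.nontrivial_of_finrank_pos (R := ℝ)
      (by rw [finrank_euclideanSpace_fin]; omega)
  -- positivity pointwise
  have hpos : ∀ x : EuclideanSpace ℝ (Fin n), (0:ℝ) < C + ‖x‖^2 := fun x => by positivity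
  -- polar coordinates
  have polar : ∀ f : ℝ → ℝ, (∫ x : EuclideanSpace ℝ (Fin n), f ‖x‖)
      = (n:ℝ) * (volume (Metric.ball (0 : EuclideanSpace ℝ (Fin n)) 1)).toReal
        * ∫ y in Set.Ioi (0:ℝ), y ^ (n-1) * f y := by
    intro f
    rw [integral_fun_norm_addHaar volume f]
    simp only [finrank_euclideanSpace_fin, nsmul_eq_mul, smul_eq_mul]
    rw [mul_assoc]
    rfl
  set κ : ℝ := (n:ℝ) * (volume (Metric.ball (0 : EuclideanSpace ℝ (Fin n)) 1)).toReal with hκ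
  have hκpos : 0 < κ := by
    apply mul_pos (by exact_mod_cast Nat.pos_of_ne_zero (by omega))
    exact ENNReal.toReal_pos (Metric.measure_ball_pos volume 0 one_pos).ne'
      (measure_ball_lt_top).ne
  set I : ℝ := ∫ r in Set.Ioi (0:ℝ), r ^ (n-1) * (C + r^2) ^ α with hIdef
  set J : ℝ := ∫ r in Set.Ioi (0:ℝ), r ^ (n+1) * (C + r^2) ^ α with hJdef
  have hIint : IntegrableOn (fun r : ℝ => r ^ (n-1) * (C + r^2) ^ α) (Set.Ioi 0) := by
    refine int_aux (n-1) α C hC ?_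
    have h2 : ((n-1 : ℕ) : ℝ) ≤ (n:ℝ) := by exact_mod_cast Nat.cast_le.mpr (Nat.sub_le n 1)
    linarith
  have hJint : IntegrableOn (fun r : ℝ => r ^ (n+1) * (C + r^2) ^ α) (Set.Ioi 0) := by
    refine int_aux (n+1) α C hC ?_
    push_cast; linarith
  -- mass
  have hmass' : κ * I = 1 := by
    have h := polar (fun r : ℝ => (C + r^2) ^ α)
    rw [← hmass]
    simp only [hB]
    exact h.symm
  have hIpos : 0 < I := by
    rcases lt_trichotomy I 0 with h | h | h
    · nlinarith
    · rw [h, mul_zero] at hmass'; norm_num at hmass'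
    · exact h
  -- B^p as a power
  have hBp : ∀ x : EuclideanSpace ℝ (Fin n), B x ^ p = (C + ‖x‖^2) ^ (α + 1) := by
    intro x
    rw [hB x, ← Real.rpow_mul (by positivity)]
    congr 1
    rw [hα]
    field_simp
    ring
  -- ∫ B^p
  have hintBp : (∫ x : EuclideanSpace ℝ (Fin n), B x ^ p) = κ * (C * I + J) := by
    have h := polar (fun r : ℝ => (C + r^2) ^ (α+1))
    simp only [hBp]
    rw [h]
    congr 1
    have h2 : ∀ y : ℝ, y ^ (n-1) * (C + y^2) ^ (α+1)
        = C * (y ^ (n-1) * (C + y^2) ^ α) + y ^ (n+1) * (C + y^2) ^ α := by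
      intro y
      have e2 : (C + y^2) ^ (α+1) = (C + y^2) ^ α * (C + y^2) := by
        rw [rpow_add_one (by positivity : C + y^2 ≠ 0)]
      have e3 : y ^ (n-1) * y^2 = y ^ (n+1) := by
        rw [← pow_add]; congr 1; omega
      rw [e2]
      linear_combination ((C + y^2) ^ α) * e3
    rw [show (fun y : ℝ => y ^ (n-1) * (C + y^2) ^ (α+1))
        = fun y : ℝ => C * (y ^ (n-1) * (C + y^2) ^ α) + y ^ (n+1) * (C + y^2) ^ α
      from funext h2]
    rw [integral_add (hIint.const_mul C) hJint, integral_const_mul]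
  -- gradient term
  have hgrad : ∀ x : EuclideanSpace ℝ (Fin n), ‖gradient (fun y => B y ^ p) x‖ ^ 2 / B x
      = (2*p/(p-1))^2 * (‖x‖^2 * (C + ‖x‖^2) ^ α) := by
    intro x
    have hfun : (fun y : EuclideanSpace ℝ (Fin n) => B y ^ p) = fun y : EuclideanSpace ℝ (Fin n) => (C + ‖y‖^2) ^ (α+1) :=
      funext hBp
    rw [hfun]
    have hg := (grad_aux C (α+1) hC x).gradient
    rw [hg]
    have e1 : α + 1 - 1 = α := by ring
    rw [e1, norm_smul, mul_pow, Real.norm_eq_abs, sq_abs, hB x, hα1]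
    rw [div_eq_iff (by positivity : (C + ‖x‖^2) ^ α ≠ 0)]
    ring
  have hintgrad : (∫ x : EuclideanSpace ℝ (Fin n), ‖gradient (fun y => B y ^ p) x‖ ^ 2 / B x)
      = κ * ((2*p/(p-1))^2 * J) := by
    have h := polar (fun r : ℝ => (2*p/(p-1))^2 * (r^2 * (C + r^2) ^ α))
    simp only [hgrad]
    rw [h]
    congr 1
    have h2 : ∀ y : ℝ, y ^ (n-1) * ((2*p/(p-1))^2 * (y^2 * (C + y^2) ^ α))
        = (2*p/(p-1))^2 * (y ^ (n+1) * (C + y^2) ^ α) := by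
      intro y
      have e3 : y ^ (n-1) * y^2 = y ^ (n+1) := by
        rw [← pow_add]; congr 1; omega
      linear_combination ((2*p/(p-1))^2 * (C + y^2) ^ α) * e3
    rw [show (fun y : ℝ => y ^ (n-1) * ((2*p/(p-1))^2 * (y^2 * (C + y^2) ^ α)))
        = fun y : ℝ => (2*p/(p-1))^2 * (y ^ (n+1) * (C + y^2) ^ α)
      from funext h2]
    rw [integral_const_mul]
  -- the FTC relation
  have hftc := key_ftc n hn α C hC hS
  rw [← hIdef, ← hJdef] at hftc
  have hftc2 : (n:ℝ)*C*I*(p-1) + (((n:ℝ)+2)*p - (n:ℝ))*J = 0 := by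
    linear_combination (p-1)*hftc - 2*J*hαp1
  have hJval : J = (n:ℝ)*C*I*(1-p)/(((n:ℝ)+2)*p - (n:ℝ)) := by
    rw [eq_div_iff hD.ne']
    linear_combination hftc2
  -- final algebra
  have h1p : (1:ℝ) - p ≠ 0 := by linarith
  have hnR : (0:ℝ) < (n:ℝ) := by exact_mod_cast Nat.pos_of_ne_zero (by omega)
  have hJpos : 0 < J := by
    rw [hJval]
    apply div_pos _ hD
    have h1p' : (0:ℝ) < 1 - p := by linarith
    exact mul_pos (mul_pos (mul_pos hnR hC) hIpos) h1p'
  have hCIJpos : 0 < C * I + J := by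
    have : 0 < C * I := mul_pos hC hIpos
    linarith
  have hXne : κ * (C * I + J) ≠ 0 := (mul_pos hκpos hCIJpos).ne'
  have hY : κ * ((2*p/(p-1))^2 * J) = (κ * (C * I + J)) * (2 * (n:ℝ) * p / (1 - p)) := by
    rw [hJval]
    field_simp [hD.ne', h1p, hp1', (ne_of_gt (by linarith [hD]) : p * ((n:ℝ)+2) - n ≠ 0)]
    ring
  rw [hintBp, hintgrad, hY, inv_mul_cancel_left₀ hXne]
end
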